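/- Let T be a rooted binary phylogenetic tree on leaf set [n] and let x ∈ Z^n_{2,even} be a 0/1 vector of length n with an even number of ones. Then there exists a unique perfect matching (pairing) of the set of leaves {ℓ ∈ [n] : x_ℓ = 1} such that the paths in T between the paired leaves are pairwise vertex-disjoint. -/

import Mathlib

/-- Rooted binary trees with leaves labeled by natural numbers. -/
inductive PhyloTree where
  | leaf : ℕ → PhyloTree
  | node : PhyloTree → PhyloTree → PhyloTree
deriving DecidableEq

namespace PhyloTree

/-- The set of leaf labels of a tree. -/
def leaves : PhyloTree → Finset ℕ
  | leaf i => {i}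
  | node l r => leaves l ∪ leaves r

/-- The list of leaf labels (left-to-right). -/
def leafList : PhyloTree → List ℕ
  | leaf i => [i]
  | node l r => leafList l ++ leafList r

/-- `t` is a rooted binary phylogenetic tree on leaf set `[n] = {0, …, n-1}`:
its leaves are bijectively labeled by `{0, …, n-1}`. -/
def IsPhylo (n : ℕ) (t : PhyloTree) : Prop :=
  t.leafList.Nodup ∧ t.leafList.toFinset = Finset.range n

/-- The subtrees of `t`; these are identified with the vertices of `t`. -/
def subtrees : PhyloTree → Finset PhyloTree
  | leaf i => {leaf i}
  | node l r => insert (node l r) (subtrees l ∪ subtrees r)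

/-- Whether the root of the tree is an internal (non-leaf) vertex. -/
def isInternal : PhyloTree → Bool
  | leaf _ => false
  | node _ _ => true

/-- The internal vertices of `t`, identified with the subtrees rooted at them. -/
def internalVertices (t : PhyloTree) : Finset PhyloTree :=
  t.subtrees.filter (fun s => s.isInternal)

/-- The most recent common ancestor of the leaves labeled `i` and `j`,
identified with the subtree rooted at it. -/
def mrca (t : PhyloTree) (i j : ℕ) : PhyloTree :=
  match t with
  | leaf a => leaf a
  | node l r =>
    if i ∈ l.leaves ∧ j ∈ l.leaves then mrca l i j
    else if i ∈ r.leaves ∧ j ∈ r.leaves then mrca r i j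
    else node l r

/-- The most recent common ancestor of a set `p` of leaf labels. -/
def mrcaSet (t : PhyloTree) (p : Finset ℕ) : PhyloTree :=
  match t with
  | leaf a => leaf a
  | node l r =>
    if p ⊆ l.leaves then mrcaSet l p
    else if p ⊆ r.leaves then mrcaSet r p
    else node l r

/-- A vertex (= subtree) is a top-most node of a path in the system of disjoint
paths `𝔓(x)` iff an odd number of elements of `x` lies below each of its two
children. -/
def isTopOf (x : Finset ℕ) : PhyloTree → Bool
  | leaf _ => false
  | node l r => decide (Odd (x ∩ l.leaves).card) && decide (Odd (x ∩ r.leaves).card)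

/-- `top(x)`: the set of top-most nodes of the paths in the system `𝔓(x)` of
pairwise disjoint paths joining the leaves in `x`. -/
def topSet (t : PhyloTree) (x : Finset ℕ) : Finset PhyloTree :=
  t.subtrees.filter (fun s => isTopOf x s)

/-- The vertices of the path in `t` between the leaves of the pair `p` (more
generally, the vertices of the smallest subtree of `t` spanning `p`). -/
def pathSet (t : PhyloTree) (p : Finset ℕ) : Finset PhyloTree :=
  (mrcaSet t p).subtrees.filter (fun s => ∃ ℓ ∈ p, ℓ ∈ s.leaves)

/-- `u` is a strict descendant of `w`. -/
def IsStrictDescendant (u w : PhyloTree) : Prop :=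
  u ≠ w ∧ u ∈ w.subtrees

end PhyloTree

/-- `ℤ₂ⁿ`-vectors with an even number of ones, encoded as even-size subsets of `Fin n`. -/
abbrev EvenSubsets (n : ℕ) := {x : Finset (Fin n) // Even x.card}

/-- Forget the bound `n`, regarding a set of coordinates as a set of leaf labels. -/
def EvenSubsets.toNat {n : ℕ} (x : EvenSubsets n) : Finset ℕ := x.1.image Fin.val

/-- The vector `1_{i,j}` with ones exactly in positions `i ≠ j`. -/
def pairIdx {n : ℕ} (i j : Fin n) (h : i ≠ j) : EvenSubsets n :=
  ⟨{i, j}, by rw [Finset.card_pair h]; exact ⟨1, rfl⟩⟩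

open MvPolynomial in
/-- The monomial map `φ_T : ℂ[q_x] → ℂ[b₀, b_v]`, `q_x ↦ b₀ ∏_{v ∈ top(x)} b_v`. -/
noncomputable def phiCFNMC (n : ℕ) (t : PhyloTree) :
    MvPolynomial (EvenSubsets n) ℂ →ₐ[ℂ] MvPolynomial (Option PhyloTree) ℂ :=
  aeval (fun x => X none * ∏ s ∈ t.topSet x.toNat, X (some s))

/-- The CFN-MC ideal `I_T = ker φ_T`. -/
noncomputable def cfnIdeal (n : ℕ) (t : PhyloTree) : Ideal (MvPolynomial (EvenSubsets n) ℂ) :=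
  RingHom.ker (phiCFNMC n t)

namespace PhyloTree

lemma leaves_eq_toFinset (t : PhyloTree) : t.leaves = t.leafList.toFinset := by
  induction t with
  | leaf i => simp [leaves, leafList]
  | node l r ihl ihr => simp [leaves, leafList, ihl, ihr]

lemma leaves_nonempty (t : PhyloTree) : t.leaves.Nonempty := by
  induction t with
  | leaf i => exact ⟨i, by simp [leaves]⟩
  | node l r ihl ihr => exact ihl.mono (by simp [leaves, Finset.subset_union_left])

def size : PhyloTree → ℕ
  | leaf _ => 1
  | node l r => size l + size r + 1

lemma self_mem_subtrees (t : PhyloTree) : t ∈ t.subtrees := by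
  cases t <;> simp [subtrees]

lemma size_le_of_mem_subtrees {s t : PhyloTree} (h : s ∈ t.subtrees) : s.size ≤ t.size := by
  induction t with
  | leaf i => simp [subtrees] at h; subst h; exact le_rfl
  | node l r ihl ihr =>
    simp [subtrees] at h
    rcases h with h | h | h
    · subst h; exact le_rfl
    · exact (ihl h).trans (by simp [size]; omega)
    · exact (ihr h).trans (by simp [size]; omega)

lemma node_not_mem_subtrees_left (l r : PhyloTree) : node l r ∉ l.subtrees := by
  intro h
  have := size_le_of_mem_subtrees h
  simp [size] at this

lemma node_not_mem_subtrees_right (l r : PhyloTree) : node l r ∉ r.subtrees := by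
  intro h
  have := size_le_of_mem_subtrees h
  simp [size] at this

lemma subtrees_trans {s t : PhyloTree} (h : s ∈ t.subtrees) : s.subtrees ⊆ t.subtrees := by
  induction t with
  | leaf i => simp [subtrees] at h; subst h; exact subset_rfl
  | node l r ihl ihr =>
    simp only [subtrees, Finset.mem_insert, Finset.mem_union] at h
    rcases h with h | h | h
    · subst h; exact subset_rfl
    · exact (ihl h).trans (by simp [subtrees]; intro a ha; simp [ha])
    · exact (ihr h).trans (by simp [subtrees]; intro a ha; simp [ha])

lemma leaves_subset_of_mem_subtrees {s t : PhyloTree} (h : s ∈ t.subtrees) :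
    s.leaves ⊆ t.leaves := by
  induction t with
  | leaf i => simp [subtrees] at h; subst h; exact subset_rfl
  | node l r ihl ihr =>
    simp only [subtrees, Finset.mem_insert, Finset.mem_union] at h
    rcases h with h | h | h
    · subst h; exact subset_rfl
    · exact (ihl h).trans (by simp [leaves])
    · exact (ihr h).trans (by simp [leaves])

lemma disjoint_subtrees_of_disjoint_leaves {l r : PhyloTree}
    (h : Disjoint l.leaves r.leaves) : Disjoint l.subtrees r.subtrees := by
  rw [Finset.disjoint_left]
  intro s hsl hsr
  obtain ⟨a, ha⟩ := leaves_nonempty s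
  exact Finset.disjoint_left.mp h (leaves_subset_of_mem_subtrees hsl ha)
    (leaves_subset_of_mem_subtrees hsr ha)

lemma nodup_node {l r : PhyloTree} (h : (node l r).leafList.Nodup) :
    l.leafList.Nodup ∧ r.leafList.Nodup ∧ Disjoint l.leaves r.leaves := by
  simp only [leafList, List.nodup_append] at h
  refine ⟨h.1, h.2.1, ?_⟩
  rw [leaves_eq_toFinset, leaves_eq_toFinset, Finset.disjoint_left]
  intro a hal har
  simp only [List.mem_toFinset] at hal har
  exact h.2.2 a hal a har rfl

end PhyloTree
namespace PhyloTree

/-- The path from leaf `a` up to the root of `t`. -/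
def spineP (t : PhyloTree) (a : ℕ) : Finset PhyloTree :=
  t.subtrees.filter (fun s => a ∈ s.leaves)

lemma spineP_subset (t : PhyloTree) (a : ℕ) : spineP t a ⊆ t.subtrees :=
  Finset.filter_subset _ _

lemma root_mem_spineP {t : PhyloTree} {a : ℕ} (h : a ∈ t.leaves) : t ∈ spineP t a := by
  simp [spineP, self_mem_subtrees, h]

lemma spineP_node_left {l r : PhyloTree} {a : ℕ} (hd : Disjoint l.leaves r.leaves)
    (ha : a ∈ l.leaves) : spineP (node l r) a = insert (node l r) (spineP l a) := by
  ext s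
  simp only [spineP, subtrees, Finset.mem_filter, Finset.mem_insert, Finset.mem_union]
  constructor
  · rintro ⟨h1 | h1 | h1, h2⟩
    · exact Or.inl h1
    · exact Or.inr ⟨h1, h2⟩
    · exact absurd (leaves_subset_of_mem_subtrees h1 h2)
        (Finset.disjoint_left.mp hd ha ·)
  · rintro (rfl | ⟨h1, h2⟩)
    · exact ⟨Or.inl rfl, by simp [leaves, ha]⟩
    · exact ⟨Or.inr (Or.inl h1), h2⟩

lemma spineP_node_right {l r : PhyloTree} {a : ℕ} (hd : Disjoint l.leaves r.leaves)
    (ha : a ∈ r.leaves) : spineP (node l r) a = insert (node l r) (spineP r a) := by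
  ext s
  simp only [spineP, subtrees, Finset.mem_filter, Finset.mem_insert, Finset.mem_union]
  constructor
  · rintro ⟨h1 | h1 | h1, h2⟩
    · exact Or.inl h1
    · exact absurd (leaves_subset_of_mem_subtrees h1 h2)
        (fun hh => Finset.disjoint_left.mp hd hh ha)
    · exact Or.inr ⟨h1, h2⟩
  · rintro (rfl | ⟨h1, h2⟩)
    · exact ⟨Or.inl rfl, by simp [leaves, ha]⟩
    · exact ⟨Or.inr (Or.inr h1), h2⟩

lemma mrcaSet_node_left {l r : PhyloTree} {p : Finset ℕ} (h : p ⊆ l.leaves) :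
    mrcaSet (node l r) p = mrcaSet l p := by
  rw [mrcaSet, if_pos h]

lemma not_subset_of_disjoint {l r : PhyloTree} {p : Finset ℕ} (hd : Disjoint l.leaves r.leaves)
    (hne : p.Nonempty) (h : p ⊆ r.leaves) : ¬ p ⊆ l.leaves := by
  intro h'
  obtain ⟨a, ha⟩ := hne
  exact Finset.disjoint_left.mp hd (h' ha) (h ha)

lemma mrcaSet_node_right {l r : PhyloTree} {p : Finset ℕ} (hd : Disjoint l.leaves r.leaves)
    (hne : p.Nonempty) (h : p ⊆ r.leaves) : mrcaSet (node l r) p = mrcaSet r p := by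
  rw [mrcaSet, if_neg (not_subset_of_disjoint hd hne h), if_pos h]

lemma mrcaSet_node_cross {l r : PhyloTree} {p : Finset ℕ} (h1 : ¬ p ⊆ l.leaves)
    (h2 : ¬ p ⊆ r.leaves) : mrcaSet (node l r) p = node l r := by
  rw [mrcaSet, if_neg h1, if_neg h2]

lemma mrcaSet_mem_subtrees (t : PhyloTree) (p : Finset ℕ) : mrcaSet t p ∈ t.subtrees := by
  induction t with
  | leaf i => simp [mrcaSet, subtrees]
  | node l r ihl ihr =>
    rw [mrcaSet]
    split
    · exact (subtrees_trans (by simp [subtrees, self_mem_subtrees] :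
        l ∈ (node l r).subtrees)) ihl
    · split
      · exact (subtrees_trans (by simp [subtrees, self_mem_subtrees] :
          r ∈ (node l r).subtrees)) ihr
      · exact self_mem_subtrees _

lemma pathSet_subset (t : PhyloTree) (p : Finset ℕ) : pathSet t p ⊆ t.subtrees :=
  (Finset.filter_subset _ _).trans (subtrees_trans (mrcaSet_mem_subtrees t p))

lemma pathSet_node_left {l r : PhyloTree} {p : Finset ℕ} (h : p ⊆ l.leaves) :
    pathSet (node l r) p = pathSet l p := by
  rw [pathSet, mrcaSet_node_left h, pathSet]

lemma pathSet_node_right {l r : PhyloTree} {p : Finset ℕ} (hd : Disjoint l.leaves r.leaves)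
    (hne : p.Nonempty) (h : p ⊆ r.leaves) : pathSet (node l r) p = pathSet r p := by
  rw [pathSet, mrcaSet_node_right hd hne h, pathSet]

lemma pathSet_cross {l r : PhyloTree} {a b : ℕ} (hd : Disjoint l.leaves r.leaves)
    (ha : a ∈ l.leaves) (hb : b ∈ r.leaves) :
    pathSet (node l r) {a, b} = insert (node l r) (spineP l a ∪ spineP r b) := by
  have h1 : ¬ ({a, b} : Finset ℕ) ⊆ l.leaves := by
    intro h; exact Finset.disjoint_left.mp hd (h (by simp)) hb
  have h2 : ¬ ({a, b} : Finset ℕ) ⊆ r.leaves := by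
    intro h; exact Finset.disjoint_left.mp hd ha (h (by simp))
  rw [pathSet, mrcaSet_node_cross h1 h2]
  ext s
  simp only [subtrees, Finset.mem_filter, Finset.mem_insert, Finset.mem_union,
    Finset.mem_singleton, spineP]
  constructor
  · rintro ⟨hs | hs | hs, ℓ, (rfl | rfl), hℓ⟩
    · exact Or.inl hs
    · exact Or.inl hs
    · exact Or.inr (Or.inl ⟨hs, hℓ⟩)
    · exact absurd (leaves_subset_of_mem_subtrees hs hℓ)
        (fun hh => Finset.disjoint_left.mp hd hh hb)
    · exact absurd (leaves_subset_of_mem_subtrees hs hℓ)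
        (fun hh => Finset.disjoint_left.mp hd ha hh)
    · exact Or.inr (Or.inr ⟨hs, hℓ⟩)
  · rintro (rfl | ⟨h1, h2⟩ | ⟨h1, h2⟩)
    · exact ⟨Or.inl rfl, a, Or.inl rfl, by simp [leaves, ha]⟩
    · exact ⟨Or.inr (Or.inl h1), a, Or.inl rfl, h2⟩
    · exact ⟨Or.inr (Or.inr h1), b, Or.inr rfl, h2⟩

lemma root_mem_pathSet_cross {l r : PhyloTree} {a b : ℕ} (hd : Disjoint l.leaves r.leaves)
    (ha : a ∈ l.leaves) (hb : b ∈ r.leaves) :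
    node l r ∈ pathSet (node l r) {a, b} := by
  rw [pathSet_cross hd ha hb]; simp

end PhyloTree
namespace PhyloTree

/-- A perfect matching of `x` with pairwise vertex-disjoint paths in `t`. -/
def Good (t : PhyloTree) (x : Finset ℕ) (M : Finset (Finset ℕ)) : Prop :=
  (∀ p ∈ M, p.card = 2) ∧
  (∀ p ∈ M, p ⊆ x) ∧
  (∀ ℓ ∈ x, ∃! p, p ∈ M ∧ ℓ ∈ p) ∧
  (∀ p ∈ M, ∀ q ∈ M, p ≠ q → Disjoint (t.pathSet p) (t.pathSet q))

/-- An odd matching: a leftover leaf `P.1` and a matching of the rest whose paths avoid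
the path from `P.1` to the root. -/
def GoodO (t : PhyloTree) (x : Finset ℕ) (P : ℕ × Finset (Finset ℕ)) : Prop :=
  P.1 ∈ x ∧ Good t (x.erase P.1) P.2 ∧
  ∀ p ∈ P.2, Disjoint (t.pathSet p) (spineP t P.1)

lemma Good.nonempty_of_mem {t x M} (h : Good t x M) {p} (hp : p ∈ M) : p.Nonempty :=
  Finset.card_pos.mp (by rw [h.1 p hp]; norm_num)

lemma Good.pair_disjoint {t x M} (h : Good t x M) {p q} (hp : p ∈ M) (hq : q ∈ M)
    (hne : p ≠ q) : Disjoint p q := by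
  rw [Finset.disjoint_left]
  intro a hap haq
  have hax : a ∈ x := h.2.1 p hp hap
  obtain ⟨u, _, hu⟩ := h.2.2.1 a hax
  exact hne ((hu p ⟨hp, hap⟩).trans (hu q ⟨hq, haq⟩).symm)

lemma Good.biUnion_eq {t x M} (h : Good t x M) : M.biUnion id = x := by
  apply Finset.Subset.antisymm
  · intro a ha
    simp only [Finset.mem_biUnion, id] at ha
    obtain ⟨p, hp, hap⟩ := ha
    exact h.2.1 p hp hap
  · intro a ha
    obtain ⟨p, ⟨hp, hap⟩, _⟩ := h.2.2.1 a ha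
    exact Finset.mem_biUnion.mpr ⟨p, hp, hap⟩

lemma Good.card_eq {t x M} (h : Good t x M) : x.card = 2 * M.card := by
  rw [← h.biUnion_eq]
  have : M.biUnion id = M.biUnion (fun p => p) := rfl
  rw [this, Finset.card_biUnion (fun p hp q hq hne => h.pair_disjoint hp hq hne)]
  rw [Finset.sum_congr rfl (fun p hp => h.1 p hp), Finset.sum_const, smul_eq_mul, mul_comm]

lemma Good.even_card {t x M} (h : Good t x M) : Even x.card := by
  rw [h.card_eq]; exact even_two_mul _

/-- Combining matchings on the two sides of a node. -/
lemma Good.union {l r : PhyloTree} {xl xr Ml Mr} (hd : Disjoint l.leaves r.leaves)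
    (hxl : xl ⊆ l.leaves) (hxr : xr ⊆ r.leaves)
    (hl : Good l xl Ml) (hr : Good r xr Mr) :
    Good (node l r) (xl ∪ xr) (Ml ∪ Mr) := by
  have hps : ∀ p ∈ Ml, pathSet (node l r) p = pathSet l p := fun p hp =>
    pathSet_node_left ((hl.2.1 p hp).trans hxl)
  have hps' : ∀ p ∈ Mr, pathSet (node l r) p = pathSet r p := fun p hp =>
    pathSet_node_right hd (hr.nonempty_of_mem hp) ((hr.2.1 p hp).trans hxr)
  have hmem : ∀ p, p ∈ Ml ∪ Mr → (p ∈ Ml ∧ p ⊆ xl) ∨ (p ∈ Mr ∧ p ⊆ xr) := by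
    intro p hp
    rcases Finset.mem_union.mp hp with hp | hp
    · exact Or.inl ⟨hp, hl.2.1 p hp⟩
    · exact Or.inr ⟨hp, hr.2.1 p hp⟩
  refine ⟨?_, ?_, ?_, ?_⟩
  · intro p hp
    rcases hmem p hp with ⟨hp, _⟩ | ⟨hp, _⟩
    · exact hl.1 p hp
    · exact hr.1 p hp
  · intro p hp
    rcases hmem p hp with ⟨_, hs⟩ | ⟨_, hs⟩
    · exact hs.trans Finset.subset_union_left
    · exact hs.trans Finset.subset_union_right
  · intro a ha
    have key : ∀ {p}, p ∈ Ml ∪ Mr → a ∈ p →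
        ((a ∈ xl → p ∈ Ml ∧ a ∈ p) ∧ (a ∈ xr → p ∈ Mr ∧ a ∈ p)) := by
      intro p hp hap
      rcases hmem p hp with ⟨hp', hs⟩ | ⟨hp', hs⟩
      · refine ⟨fun _ => ⟨hp', hap⟩, fun har => ?_⟩
        exact absurd (hxl (hs hap)) (fun hh => Finset.disjoint_left.mp hd hh (hxr har))
      · refine ⟨fun hal => ?_, fun _ => ⟨hp', hap⟩⟩
        exact absurd (hxl hal) (fun hh => Finset.disjoint_left.mp hd hh (hxr (hs hap)))
    rcases Finset.mem_union.mp ha with ha' | ha'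
    · obtain ⟨p, ⟨hp, hap⟩, hu⟩ := hl.2.2.1 a ha'
      refine ⟨p, ⟨Finset.mem_union_left _ hp, hap⟩, ?_⟩
      rintro q ⟨hq, haq⟩
      exact hu q ((key hq haq).1 ha')
    · obtain ⟨p, ⟨hp, hap⟩, hu⟩ := hr.2.2.1 a ha'
      refine ⟨p, ⟨Finset.mem_union_right _ hp, hap⟩, ?_⟩
      rintro q ⟨hq, haq⟩
      exact hu q ((key hq haq).2 ha')
  · intro p hp q hq hne
    rcases Finset.mem_union.mp hp with hp' | hp' <;>
      rcases Finset.mem_union.mp hq with hq' | hq'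
    · rw [hps p hp', hps q hq']; exact hl.2.2.2 p hp' q hq' hne
    · rw [hps p hp', hps' q hq']
      exact Finset.disjoint_of_subset_left (pathSet_subset l p)
        (Finset.disjoint_of_subset_right (pathSet_subset r q)
          (disjoint_subtrees_of_disjoint_leaves hd))
    · rw [hps' p hp', hps q hq']
      exact Finset.disjoint_of_subset_right (pathSet_subset l q)
        (Finset.disjoint_of_subset_left (pathSet_subset r p)
          (disjoint_subtrees_of_disjoint_leaves hd).symm)
    · rw [hps' p hp', hps' q hq']; exact hr.2.2.2 p hp' q hq' hne

/-- Splitting a crossing-free matching at a node into its two sides. -/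
lemma Good.split {l r : PhyloTree} {x M} (hd : Disjoint l.leaves r.leaves)
    (hM : Good (node l r) x M)
    (hcross : ∀ p ∈ M, p ⊆ l.leaves ∨ p ⊆ r.leaves) :
    Good l (x ∩ l.leaves) (M.filter (· ⊆ l.leaves)) ∧
    Good r (x ∩ r.leaves) (M.filter (fun p => ¬ p ⊆ l.leaves)) ∧
    M = M.filter (· ⊆ l.leaves) ∪ M.filter (fun p => ¬ p ⊆ l.leaves) := by
  have hrr : ∀ p ∈ M, ¬ p ⊆ l.leaves → p ⊆ r.leaves := by
    intro p hp hn
    rcases hcross p hp with h | h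
    · exact absurd h hn
    · exact h
  have hlr : ∀ p ∈ M, p ⊆ l.leaves → pathSet (node l r) p = pathSet l p := fun p hp h =>
    pathSet_node_left h
  have hrr' : ∀ p ∈ M, ¬ p ⊆ l.leaves → pathSet (node l r) p = pathSet r p := fun p hp h =>
    pathSet_node_right hd (hM.nonempty_of_mem hp) (hrr p hp h)
  refine ⟨⟨?_, ?_, ?_, ?_⟩, ⟨?_, ?_, ?_, ?_⟩, (Finset.filter_union_filter_not_eq _ M).symm⟩
  · intro p hp; exact hM.1 p (Finset.mem_of_mem_filter p hp)
  · intro p hp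
    rw [Finset.mem_filter] at hp
    exact Finset.subset_inter (hM.2.1 p hp.1) hp.2
  · intro a ha
    rw [Finset.mem_inter] at ha
    obtain ⟨p, ⟨hp, hap⟩, hu⟩ := hM.2.2.1 a ha.1
    have hpl : p ⊆ l.leaves := by
      rcases hcross p hp with h | h
      · exact h
      · exact absurd (h hap) (fun hh => Finset.disjoint_left.mp hd ha.2 hh)
    refine ⟨p, ⟨Finset.mem_filter.mpr ⟨hp, hpl⟩, hap⟩, ?_⟩
    rintro q ⟨hq, haq⟩
    exact hu q ⟨Finset.mem_of_mem_filter q hq, haq⟩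
  · intro p hp q hq hne
    rw [Finset.mem_filter] at hp hq
    rw [← hlr p hp.1 hp.2, ← hlr q hq.1 hq.2]
    exact hM.2.2.2 p hp.1 q hq.1 hne
  · intro p hp; exact hM.1 p (Finset.mem_of_mem_filter p hp)
  · intro p hp
    rw [Finset.mem_filter] at hp
    exact Finset.subset_inter (hM.2.1 p hp.1) (hrr p hp.1 hp.2)
  · intro a ha
    rw [Finset.mem_inter] at ha
    obtain ⟨p, ⟨hp, hap⟩, hu⟩ := hM.2.2.1 a ha.1
    have hpl : ¬ p ⊆ l.leaves := by
      intro h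
      exact Finset.disjoint_left.mp hd (h hap) ha.2
    refine ⟨p, ⟨Finset.mem_filter.mpr ⟨hp, hpl⟩, hap⟩, ?_⟩
    rintro q ⟨hq, haq⟩
    exact hu q ⟨Finset.mem_of_mem_filter q hq, haq⟩
  · intro p hp q hq hne
    rw [Finset.mem_filter] at hp hq
    rw [← hrr' p hp.1 hp.2, ← hrr' q hq.1 hq.2]
    exact hM.2.2.2 p hp.1 q hq.1 hne

/-- A pair which crosses a node. -/
lemma crossing_struct {l r : PhyloTree} {p : Finset ℕ}
    (hp2 : p.card = 2) (hpx : p ⊆ l.leaves ∪ r.leaves)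
    (h1 : ¬ p ⊆ l.leaves) (h2 : ¬ p ⊆ r.leaves) :
    ∃ a b, a ∈ l.leaves ∧ b ∈ r.leaves ∧ p = {a, b} := by
  obtain ⟨a, b, hab, rfl⟩ := Finset.card_eq_two.mp hp2
  have ha := hpx (by simp : a ∈ ({a, b} : Finset ℕ))
  have hb := hpx (by simp : b ∈ ({a, b} : Finset ℕ))
  rw [Finset.mem_union] at ha hb
  rcases ha with ha | ha <;> rcases hb with hb | hb
  · exact absurd (fun ℓ hℓ => by
      rcases Finset.mem_insert.mp hℓ with rfl | hℓ
      · exact ha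
      · rw [Finset.mem_singleton] at hℓ; subst hℓ; exact hb) h1
  · exact ⟨a, b, ha, hb, rfl⟩
  · exact ⟨b, a, hb, ha, by rw [Finset.pair_comm]⟩
  · exact absurd (fun ℓ hℓ => by
      rcases Finset.mem_insert.mp hℓ with rfl | hℓ
      · exact ha
      · rw [Finset.mem_singleton] at hℓ; subst hℓ; exact hb) h2

end PhyloTree
namespace PhyloTree

lemma Good.erase_pair {t x M} (h : Good t x M) {p0} (hp0 : p0 ∈ M) :
    Good t (x \ p0) (M.erase p0) := by
  refine ⟨?_, ?_, ?_, ?_⟩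
  · intro p hp; exact h.1 p (Finset.mem_of_mem_erase hp)
  · intro p hp
    have hpM := Finset.mem_of_mem_erase hp
    have hne := Finset.ne_of_mem_erase hp
    intro a hap
    refine Finset.mem_sdiff.mpr ⟨h.2.1 p hpM hap, ?_⟩
    exact Finset.disjoint_left.mp (h.pair_disjoint hpM hp0 hne) hap
  · intro a ha
    rw [Finset.mem_sdiff] at ha
    obtain ⟨p, ⟨hp, hap⟩, hu⟩ := h.2.2.1 a ha.1
    have hne : p ≠ p0 := fun hh => ha.2 (hh ▸ hap)
    refine ⟨p, ⟨Finset.mem_erase.mpr ⟨hne, hp⟩, hap⟩, ?_⟩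
    rintro q ⟨hq, haq⟩
    exact hu q ⟨Finset.mem_of_mem_erase hq, haq⟩
  · intro p hp q hq hne
    exact h.2.2.2 p (Finset.mem_of_mem_erase hp) q (Finset.mem_of_mem_erase hq) hne

lemma erase_inter (x L : Finset ℕ) (a : ℕ) : (x.erase a) ∩ L = (x ∩ L).erase a := by
  ext c
  simp only [Finset.mem_inter, Finset.mem_erase]
  tauto

lemma sdiff_pair_inter {x L : Finset ℕ} {a b : ℕ} (hb : b ∉ L) :
    (x \ {a, b}) ∩ L = (x ∩ L).erase a := by
  ext c
  simp only [Finset.mem_inter, Finset.mem_sdiff, Finset.mem_insert, Finset.mem_singleton,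
    Finset.mem_erase, not_or]
  constructor
  · rintro ⟨⟨hcx, hna, _⟩, hcL⟩
    exact ⟨hna, hcx, hcL⟩
  · rintro ⟨hna, hcx, hcL⟩
    exact ⟨⟨hcx, hna, fun hh => hb (hh ▸ hcL)⟩, hcL⟩

/-- Combining two odd matchings with a crossing pair at the root. -/
lemma GoodO.combine {l r : PhyloTree} {xl xr : Finset ℕ} {a b : ℕ} {Ml Mr}
    (hd : Disjoint l.leaves r.leaves) (hxl : xl ⊆ l.leaves) (hxr : xr ⊆ r.leaves)
    (hl : GoodO l xl (a, Ml)) (hr : GoodO r xr (b, Mr)) :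
    Good (node l r) (xl ∪ xr) (insert {a, b} (Ml ∪ Mr)) := by
  obtain ⟨hal, hGl, hsl⟩ := hl
  obtain ⟨hbr, hGr, hsr⟩ := hr
  simp only at hal hGl hsl hbr hGr hsr
  have haL : a ∈ l.leaves := hxl hal
  have hbR : b ∈ r.leaves := hxr hbr
  have hab : a ≠ b := fun hh => Finset.disjoint_left.mp hd haL (hh ▸ hbR)
  have hG0 : Good (node l r) ((xl.erase a) ∪ (xr.erase b)) (Ml ∪ Mr) :=
    Good.union hd ((Finset.erase_subset _ _).trans hxl)
      ((Finset.erase_subset _ _).trans hxr) hGl hGr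
  have hpsl : ∀ p ∈ Ml, pathSet (node l r) p = pathSet l p := fun p hp =>
    pathSet_node_left ((hGl.2.1 p hp).trans ((Finset.erase_subset _ _).trans hxl))
  have hpsr : ∀ p ∈ Mr, pathSet (node l r) p = pathSet r p := fun p hp =>
    pathSet_node_right hd (hGr.nonempty_of_mem hp)
      ((hGr.2.1 p hp).trans ((Finset.erase_subset _ _).trans hxr))
  have hcr : pathSet (node l r) {a, b} = insert (node l r) (spineP l a ∪ spineP r b) :=
    pathSet_cross hd haL hbR
  have hUa : ∀ q ∈ Ml ∪ Mr, a ∉ q ∧ b ∉ q := by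
    intro q hq
    constructor <;> intro hmem
    · rcases Finset.mem_union.mp hq with hq' | hq'
      · exact absurd (hGl.2.1 q hq' hmem) (by simp)
      · exact Finset.disjoint_left.mp hd haL
          (hxr (Finset.erase_subset _ _ (hGr.2.1 q hq' hmem)))
    · rcases Finset.mem_union.mp hq with hq' | hq'
      · exact Finset.disjoint_left.mp hd
          (hxl (Finset.erase_subset _ _ (hGl.2.1 q hq' hmem))) hbR
      · exact absurd (hGr.2.1 q hq' hmem) (by simp)
  have hdisjcross : ∀ p ∈ Ml ∪ Mr,
      Disjoint (pathSet (node l r) p) (pathSet (node l r) {a, b}) := by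
    intro p hp
    rw [hcr, Finset.disjoint_left]
    intro v hv
    rcases Finset.mem_union.mp hp with hp' | hp'
    · rw [hpsl p hp'] at hv
      have hvl : v ∈ l.subtrees := pathSet_subset l p hv
      simp only [Finset.mem_insert, Finset.mem_union, not_or]
      refine ⟨fun hh => node_not_mem_subtrees_left l r (hh ▸ hvl), ?_, ?_⟩
      · exact Finset.disjoint_left.mp (hsl p hp') hv
      · intro hh
        exact Finset.disjoint_left.mp (disjoint_subtrees_of_disjoint_leaves hd) hvl
          (spineP_subset r b hh)
    · rw [hpsr p hp'] at hv
      have hvr : v ∈ r.subtrees := pathSet_subset r p hv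
      simp only [Finset.mem_insert, Finset.mem_union, not_or]
      refine ⟨fun hh => node_not_mem_subtrees_right l r (hh ▸ hvr), ?_, ?_⟩
      · intro hh
        exact Finset.disjoint_left.mp (disjoint_subtrees_of_disjoint_leaves hd)
          (spineP_subset l a hh) hvr
      · exact Finset.disjoint_left.mp (hsr p hp') hv
  refine ⟨?_, ?_, ?_, ?_⟩
  · intro p hp
    rcases Finset.mem_insert.mp hp with rfl | hp'
    · exact Finset.card_pair hab
    · exact hG0.1 p hp'
  · intro p hp
    rcases Finset.mem_insert.mp hp with rfl | hp'
    · intro c hc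
      rcases Finset.mem_insert.mp hc with rfl | hc
      · exact Finset.mem_union_left _ hal
      · rw [Finset.mem_singleton] at hc; subst hc
        exact Finset.mem_union_right _ hbr
    · exact (hG0.2.1 p hp').trans
        (Finset.union_subset_union (Finset.erase_subset _ _) (Finset.erase_subset _ _))
  · intro c hc
    by_cases hca : c = a
    · subst hca
      refine ⟨{c, b}, ⟨Finset.mem_insert_self _ _, by simp⟩, ?_⟩
      rintro q ⟨hq, hcq⟩
      rcases Finset.mem_insert.mp hq with rfl | hq'
      · rfl
      · exact absurd hcq (hUa q hq').1
    by_cases hcb : c = b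
    · subst hcb
      refine ⟨{a, c}, ⟨Finset.mem_insert_self _ _, by simp⟩, ?_⟩
      rintro q ⟨hq, hcq⟩
      rcases Finset.mem_insert.mp hq with rfl | hq'
      · rfl
      · exact absurd hcq (hUa q hq').2
    · have hc' : c ∈ (xl.erase a) ∪ (xr.erase b) := by
        rcases Finset.mem_union.mp hc with h | h
        · exact Finset.mem_union_left _ (Finset.mem_erase.mpr ⟨hca, h⟩)
        · exact Finset.mem_union_right _ (Finset.mem_erase.mpr ⟨hcb, h⟩)
      obtain ⟨p, ⟨hp, hcp⟩, hu⟩ := hG0.2.2.1 c hc'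
      refine ⟨p, ⟨Finset.mem_insert_of_mem hp, hcp⟩, ?_⟩
      rintro q ⟨hq, hcq⟩
      rcases Finset.mem_insert.mp hq with rfl | hq'
      · rcases Finset.mem_insert.mp hcq with rfl | hcq'
        · exact absurd rfl hca
        · rw [Finset.mem_singleton] at hcq'; exact absurd hcq' hcb
      · exact hu q ⟨hq', hcq⟩
  · intro p hp q hq hne
    rcases Finset.mem_insert.mp hp with rfl | hp' <;>
      rcases Finset.mem_insert.mp hq with h | hq'
    · exact absurd h.symm hne
    · exact (hdisjcross q hq').symm
    · subst h; exact hdisjcross p hp'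
    · exact hG0.2.2.2 p hp' q hq' hne

/-- Extending an odd matching on one side by an even matching on the other. -/
lemma GoodO.combineEvenL {l r : PhyloTree} {xl xr : Finset ℕ} {a : ℕ} {Ml Mr}
    (hd : Disjoint l.leaves r.leaves) (hxl : xl ⊆ l.leaves) (hxr : xr ⊆ r.leaves)
    (hl : GoodO l xl (a, Ml)) (hr : Good r xr Mr) :
    GoodO (node l r) (xl ∪ xr) (a, Ml ∪ Mr) := by
  obtain ⟨hal, hGl, hsl⟩ := hl
  simp only at hal hGl hsl
  have haL : a ∈ l.leaves := hxl hal
  have haR : a ∉ xr := fun hh => Finset.disjoint_left.mp hd haL (hxr hh)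
  have hxe : (xl ∪ xr).erase a = (xl.erase a) ∪ xr := by
    rw [Finset.erase_union_distrib, Finset.erase_eq_of_notMem haR]
  have hsp : spineP (node l r) a = insert (node l r) (spineP l a) := spineP_node_left hd haL
  refine ⟨Finset.mem_union_left _ hal, ?_, ?_⟩
  · simp only
    rw [hxe]
    exact Good.union hd ((Finset.erase_subset _ _).trans hxl) hxr hGl hr
  · intro p hp
    simp only at hp ⊢
    rw [hsp, Finset.disjoint_left]
    intro v hv
    rcases Finset.mem_union.mp hp with hp' | hp'
    · rw [pathSet_node_left ((hGl.2.1 p hp').trans ((Finset.erase_subset _ _).trans hxl))] at hv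
      have hvl : v ∈ l.subtrees := pathSet_subset l p hv
      simp only [Finset.mem_insert, not_or]
      exact ⟨fun hh => node_not_mem_subtrees_left l r (hh ▸ hvl),
        Finset.disjoint_left.mp (hsl p hp') hv⟩
    · rw [pathSet_node_right hd (hr.nonempty_of_mem hp') ((hr.2.1 p hp').trans hxr)] at hv
      have hvr : v ∈ r.subtrees := pathSet_subset r p hv
      simp only [Finset.mem_insert, not_or]
      refine ⟨fun hh => node_not_mem_subtrees_right l r (hh ▸ hvr), fun hh => ?_⟩
      exact Finset.disjoint_left.mp (disjoint_subtrees_of_disjoint_leaves hd)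
        (spineP_subset l a hh) hvr

/-- Mirror image of `GoodO.combineEvenL`. -/
lemma GoodO.combineEvenR {l r : PhyloTree} {xl xr : Finset ℕ} {b : ℕ} {Ml Mr}
    (hd : Disjoint l.leaves r.leaves) (hxl : xl ⊆ l.leaves) (hxr : xr ⊆ r.leaves)
    (hl : Good l xl Ml) (hr : GoodO r xr (b, Mr)) :
    GoodO (node l r) (xl ∪ xr) (b, Ml ∪ Mr) := by
  obtain ⟨hbr, hGr, hsr⟩ := hr
  simp only at hbr hGr hsr
  have hbR : b ∈ r.leaves := hxr hbr
  have hbL : b ∉ xl := fun hh => Finset.disjoint_left.mp hd (hxl hh) hbR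
  have hxe : (xl ∪ xr).erase b = xl ∪ (xr.erase b) := by
    rw [Finset.erase_union_distrib, Finset.erase_eq_of_notMem hbL]
  have hsp : spineP (node l r) b = insert (node l r) (spineP r b) := spineP_node_right hd hbR
  refine ⟨Finset.mem_union_right _ hbr, ?_, ?_⟩
  · simp only
    rw [hxe]
    exact Good.union hd hxl ((Finset.erase_subset _ _).trans hxr) hl hGr
  · intro p hp
    simp only at hp ⊢
    rw [hsp, Finset.disjoint_left]
    intro v hv
    rcases Finset.mem_union.mp hp with hp' | hp'
    · rw [pathSet_node_left ((hl.2.1 p hp').trans hxl)] at hv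
      have hvl : v ∈ l.subtrees := pathSet_subset l p hv
      simp only [Finset.mem_insert, not_or]
      refine ⟨fun hh => node_not_mem_subtrees_left l r (hh ▸ hvl), fun hh => ?_⟩
      exact Finset.disjoint_left.mp (disjoint_subtrees_of_disjoint_leaves hd) hvl
        (spineP_subset r b hh)
    · rw [pathSet_node_right hd (hGr.nonempty_of_mem hp')
        ((hGr.2.1 p hp').trans ((Finset.erase_subset _ _).trans hxr))] at hv
      have hvr : v ∈ r.subtrees := pathSet_subset r p hv
      simp only [Finset.mem_insert, not_or]
      exact ⟨fun hh => node_not_mem_subtrees_right l r (hh ▸ hvr),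
        Finset.disjoint_left.mp (hsr p hp') hv⟩

end PhyloTree
namespace PhyloTree

lemma good_empty (t : PhyloTree) : Good t ∅ ∅ :=
  ⟨by simp, by simp, by simp, by simp⟩

lemma Good.eq_empty {t : PhyloTree} {M} (h : Good t ∅ M) : M = ∅ := by
  rcases Finset.eq_empty_or_nonempty M with rfl | ⟨p, hp⟩
  · rfl
  · have h0 : p = ∅ := Finset.subset_empty.mp (h.2.1 p hp)
    have hc := h.1 p hp
    rw [h0] at hc
    simp at hc


lemma cross_root {l r : PhyloTree} {x M} (hd : Disjoint l.leaves r.leaves)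
    (hx' : x ⊆ l.leaves ∪ r.leaves) (hM : Good (node l r) x M) {p} (hp : p ∈ M)
    (h1 : ¬ p ⊆ l.leaves) (h2 : ¬ p ⊆ r.leaves) :
    node l r ∈ pathSet (node l r) p := by
  obtain ⟨a, b, haL, hbR, rfl⟩ :=
    crossing_struct (hM.1 p hp) ((hM.2.1 p hp).trans hx') h1 h2
  exact root_mem_pathSet_cross hd haL hbR

lemma cross_unique {l r : PhyloTree} {x M} (hd : Disjoint l.leaves r.leaves)
    (hx' : x ⊆ l.leaves ∪ r.leaves) (hM : Good (node l r) x M) {p q}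
    (hp : p ∈ M) (hq : q ∈ M)
    (hp1 : ¬ p ⊆ l.leaves) (hp2 : ¬ p ⊆ r.leaves)
    (hq1 : ¬ q ⊆ l.leaves) (hq2 : ¬ q ⊆ r.leaves) : p = q := by
  by_contra hne
  exact Finset.disjoint_left.mp (hM.2.2.2 p hp q hq hne)
    (cross_root hd hx' hM hp hp1 hp2) (cross_root hd hx' hM hq hq1 hq2)

theorem existsUnique_good (t : PhyloTree) (hnd : t.leafList.Nodup) :
    (∀ x, x ⊆ t.leaves → Even x.card → ∃! M, Good t x M) ∧
    (∀ x, x ⊆ t.leaves → Odd x.card → ∃! P : ℕ × Finset (Finset ℕ), GoodO t x P) := by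
  induction t with
  | leaf i =>
    constructor
    · intro x hx hev
      have hx1 : x.card ≤ 1 := by
        have := Finset.card_le_card hx
        simpa [leaves] using this
      have hx0 : x = ∅ := by
        rw [Nat.even_iff] at hev
        exact Finset.card_eq_zero.mp (by omega)
      subst hx0
      exact ⟨∅, good_empty _, fun M hM => hM.eq_empty⟩
    · intro x hx hodd
      have hx1 : x.card ≤ 1 := by
        have := Finset.card_le_card hx
        simpa [leaves] using this
      have hxi : x = {i} := by
        have h1 : x.card = 1 := by rw [Nat.odd_iff] at hodd; omega
        apply Finset.eq_of_subset_of_card_le (by simpa [leaves] using hx)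
        simp [h1]
      subst hxi
      refine ⟨(i, ∅), ⟨by simp, by simpa using good_empty (leaf i), by simp⟩, ?_⟩
      rintro ⟨ℓ, M⟩ ⟨hℓ, hGM, -⟩
      simp only [Finset.mem_singleton] at hℓ
      subst hℓ
      have : M = ∅ := by
        have h0 : ({ℓ} : Finset ℕ).erase ℓ = ∅ := by simp
        rw [h0] at hGM
        exact hGM.eq_empty
      rw [this]
  | node l r ihl ihr =>
    obtain ⟨ndl, ndr, hd⟩ := nodup_node hnd
    obtain ⟨ihlE, ihlO⟩ := ihl ndl
    obtain ⟨ihrE, ihrO⟩ := ihr ndr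
    have prolog : ∀ x : Finset ℕ, x ⊆ (node l r).leaves →
        x ⊆ l.leaves ∪ r.leaves ∧ x = (x ∩ l.leaves) ∪ (x ∩ r.leaves) ∧
        x.card = (x ∩ l.leaves).card + (x ∩ r.leaves).card := by
      intro x hx
      have hx' : x ⊆ l.leaves ∪ r.leaves := hx
      have hxu : x = (x ∩ l.leaves) ∪ (x ∩ r.leaves) := by
        rw [← Finset.inter_union_distrib_left]
        exact (Finset.inter_eq_left.mpr hx').symm
      refine ⟨hx', hxu, ?_⟩
      rw [hxu]
      rw [Finset.card_union_of_disjoint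
        (hd.mono Finset.inter_subset_right Finset.inter_subset_right)]
      rw [← hxu]
    constructor
    all_goals intro x hx hpar
    all_goals obtain ⟨hx', hxu, hcards⟩ := prolog x hx
    · -- EVEN case
      by_cases ho : Odd (x ∩ l.leaves).card
      · -- both sides odd: unique crossing pair
        have hor : Odd (x ∩ r.leaves).card := by
          rw [Nat.odd_iff] at ho ⊢; rw [Nat.even_iff] at hpar; omega
        obtain ⟨Pl, hPl, hPlu⟩ := ihlO (x ∩ l.leaves) Finset.inter_subset_right ho
        obtain ⟨Pr, hPr, hPru⟩ := ihrO (x ∩ r.leaves) Finset.inter_subset_right hor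
        have hW : Good (node l r) x (insert {Pl.1, Pr.1} (Pl.2 ∪ Pr.2)) := by
          rw [hxu]
          exact GoodO.combine hd Finset.inter_subset_right Finset.inter_subset_right hPl hPr
        refine ⟨insert {Pl.1, Pr.1} (Pl.2 ∪ Pr.2), hW, ?_⟩
        intro M hM
        -- there is a crossing pair
        by_cases hnc : ∀ p ∈ M, p ⊆ l.leaves ∨ p ⊆ r.leaves
        · exfalso
          obtain ⟨hGl, -, -⟩ := hM.split hd hnc
          exact (Nat.not_odd_iff_even.mpr hGl.even_card) ho
        push_neg at hnc
        obtain ⟨p0, hp0, h1, h2⟩ := hnc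
        obtain ⟨a, b, haL, hbR, rfl⟩ :=
          crossing_struct (hM.1 p0 hp0) ((hM.2.1 p0 hp0).trans hx') h1 h2
        have haxl : a ∈ x ∩ l.leaves :=
          Finset.mem_inter.mpr ⟨hM.2.1 _ hp0 (by simp), haL⟩
        have hbxr : b ∈ x ∩ r.leaves :=
          Finset.mem_inter.mpr ⟨hM.2.1 _ hp0 (by simp), hbR⟩
        have hM' : Good (node l r) (x \ {a, b}) (M.erase {a, b}) := hM.erase_pair hp0
        have hnc' : ∀ q ∈ M.erase {a, b}, q ⊆ l.leaves ∨ q ⊆ r.leaves := by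
          intro q hq
          by_contra hcq
          push_neg at hcq
          exact (Finset.ne_of_mem_erase hq)
            (cross_unique hd hx' hM (Finset.mem_of_mem_erase hq) hp0 hcq.1 hcq.2 h1 h2)
        obtain ⟨hGl, hGr, hMeq⟩ := hM'.split hd hnc'
        rw [sdiff_pair_inter (fun hh => Finset.disjoint_left.mp hd hh hbR)] at hGl
        have hsetr : (x \ {a, b}) ∩ r.leaves = (x ∩ r.leaves).erase b := by
          rw [show ({a, b} : Finset ℕ) = {b, a} from Finset.pair_comm a b]
          exact sdiff_pair_inter (fun hh => Finset.disjoint_left.mp hd haL hh)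
        rw [hsetr] at hGr
        have hOl : GoodO l (x ∩ l.leaves) (a, M.erase {a, b} |>.filter (· ⊆ l.leaves)) := by
          refine ⟨haxl, hGl, ?_⟩
          intro p hp
          simp only [Finset.mem_filter] at hp
          have hpM : p ∈ M := Finset.mem_of_mem_erase hp.1
          have hdp := hM.2.2.2 p hpM _ hp0 (Finset.ne_of_mem_erase hp.1)
          rw [pathSet_cross hd haL hbR, ← pathSet_node_left hp.2] at *
          exact hdp.mono_right (Finset.subset_union_left.trans (Finset.subset_insert _ _))
        have hOr : GoodO r (x ∩ r.leaves)
            (b, M.erase {a, b} |>.filter (fun p => ¬ p ⊆ l.leaves)) := by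
          refine ⟨hbxr, hGr, ?_⟩
          intro p hp
          simp only [Finset.mem_filter] at hp
          have hpM : p ∈ M := Finset.mem_of_mem_erase hp.1
          have hpr : p ⊆ r.leaves := by
            rcases hnc' p hp.1 with h | h
            · exact absurd h hp.2
            · exact h
          have hdp := hM.2.2.2 p hpM _ hp0 (Finset.ne_of_mem_erase hp.1)
          rw [pathSet_cross hd haL hbR,
            ← pathSet_node_right hd (hM.nonempty_of_mem hpM) hpr] at *
          exact hdp.mono_right (Finset.subset_union_right.trans (Finset.subset_insert _ _))
        have hl2 := hPlu _ hOl
        have hr2 := hPru _ hOr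
        rw [← hl2, ← hr2]
        show M = insert {a, b} ((M.erase {a, b}).filter (fun p => p ⊆ l.leaves) ∪
          (M.erase {a, b}).filter (fun p => ¬ p ⊆ l.leaves))
        rw [← hMeq, Finset.insert_erase hp0]
      · -- both sides even
        have hel : Even (x ∩ l.leaves).card := Nat.not_odd_iff_even.mp ho
        have her : Even (x ∩ r.leaves).card := by
          rw [Nat.even_iff] at hel ⊢; rw [Nat.even_iff] at hpar; omega
        obtain ⟨Wl, hWl, hWlu⟩ := ihlE (x ∩ l.leaves) Finset.inter_subset_right hel
        obtain ⟨Wr, hWr, hWru⟩ := ihrE (x ∩ r.leaves) Finset.inter_subset_right her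
        have hW : Good (node l r) x (Wl ∪ Wr) := by
          rw [hxu]
          exact Good.union hd Finset.inter_subset_right Finset.inter_subset_right hWl hWr
        refine ⟨Wl ∪ Wr, hW, ?_⟩
        intro M hM
        have hnc : ∀ p ∈ M, p ⊆ l.leaves ∨ p ⊆ r.leaves := by
          intro p hp
          by_contra hcp
          push_neg at hcp
          obtain ⟨a, b, haL, hbR, rfl⟩ :=
            crossing_struct (hM.1 p hp) ((hM.2.1 p hp).trans hx') hcp.1 hcp.2
          have haxl : a ∈ x ∩ l.leaves :=
            Finset.mem_inter.mpr ⟨hM.2.1 _ hp (by simp), haL⟩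
          have hM' : Good (node l r) (x \ {a, b}) (M.erase {a, b}) := hM.erase_pair hp
          have hnc' : ∀ q ∈ M.erase {a, b}, q ⊆ l.leaves ∨ q ⊆ r.leaves := by
            intro q hq
            by_contra hcq
            push_neg at hcq
            exact (Finset.ne_of_mem_erase hq)
              (cross_unique hd hx' hM (Finset.mem_of_mem_erase hq) hp hcq.1 hcq.2 hcp.1 hcp.2)
          obtain ⟨hGl, -, -⟩ := hM'.split hd hnc'
          rw [sdiff_pair_inter (fun hh => Finset.disjoint_left.mp hd hh hbR)] at hGl
          have hev' := hGl.even_card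
          rw [Finset.card_erase_of_mem haxl] at hev'
          have h1 : 1 ≤ (x ∩ l.leaves).card := Finset.card_pos.mpr ⟨a, haxl⟩
          rw [Nat.even_iff] at hev' hel
          omega
        obtain ⟨hGl, hGr, hMeq⟩ := hM.split hd hnc
        rw [hMeq, hWlu _ hGl, hWru _ hGr]
    · -- ODD case
      by_cases ho : Odd (x ∩ l.leaves).card
      · -- left side odd, right side even
        have her : Even (x ∩ r.leaves).card := by
          rw [Nat.even_iff]; rw [Nat.odd_iff] at ho hpar; omega
        obtain ⟨Pl, hPl, hPlu⟩ := ihlO (x ∩ l.leaves) Finset.inter_subset_right ho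
        obtain ⟨Wr, hWr, hWru⟩ := ihrE (x ∩ r.leaves) Finset.inter_subset_right her
        have hW : GoodO (node l r) x (Pl.1, Pl.2 ∪ Wr) := by
          rw [hxu]
          exact GoodO.combineEvenL hd Finset.inter_subset_right Finset.inter_subset_right
            hPl hWr
        refine ⟨(Pl.1, Pl.2 ∪ Wr), hW, ?_⟩
        rintro ⟨ℓ, M⟩ ⟨hℓx, hGM, hspine⟩
        simp only at hℓx hGM hspine
        have hroot : node l r ∈ spineP (node l r) ℓ := root_mem_spineP (hx hℓx)
        have hnc : ∀ p ∈ M, p ⊆ l.leaves ∨ p ⊆ r.leaves := by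
          intro p hp
          by_contra hcp
          push_neg at hcp
          obtain ⟨a, b, haL, hbR, rfl⟩ := crossing_struct (hGM.1 p hp)
            ((hGM.2.1 p hp).trans ((Finset.erase_subset _ _).trans hx')) hcp.1 hcp.2
          exact Finset.disjoint_left.mp (hspine _ hp) (root_mem_pathSet_cross hd haL hbR) hroot
        obtain ⟨hGl, hGr, hMeq⟩ := hGM.split hd hnc
        rw [erase_inter] at hGl hGr
        have hℓL : ℓ ∈ l.leaves := by
          rcases Finset.mem_union.mp (hx' hℓx) with h | h
          · exact h
          · exfalso
            have hnl : ℓ ∉ x ∩ l.leaves :=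
              fun hh => Finset.disjoint_left.mp hd (Finset.mem_inter.mp hh).2 h
            rw [Finset.erase_eq_of_notMem hnl] at hGl
            exact (Nat.not_odd_iff_even.mpr hGl.even_card) ho
        have hℓnr : ℓ ∉ x ∩ r.leaves :=
          fun hh => Finset.disjoint_left.mp hd hℓL (Finset.mem_inter.mp hh).2
        rw [Finset.erase_eq_of_notMem hℓnr] at hGr
        have hspl : spineP (node l r) ℓ = insert (node l r) (spineP l ℓ) :=
          spineP_node_left hd hℓL
        have hOl : GoodO l (x ∩ l.leaves) (ℓ, M.filter (· ⊆ l.leaves)) := by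
          refine ⟨Finset.mem_inter.mpr ⟨hℓx, hℓL⟩, hGl, ?_⟩
          intro p hp
          simp only [Finset.mem_filter] at hp
          have := hspine p hp.1
          rw [hspl, ← pathSet_node_left hp.2] at *
          exact this.mono_right (Finset.subset_insert _ _)
        have hl2 := hPlu _ hOl
        have hr2 := hWru _ hGr
        rw [← hl2]
        show (ℓ, M) = (ℓ, M.filter (fun p => p ⊆ l.leaves) ∪ Wr)
        rw [Prod.mk.injEq]
        exact ⟨rfl, by (conv_lhs => rw [hMeq]); rw [hr2]⟩
      · -- right side odd, left side even
        have hel : Even (x ∩ l.leaves).card := Nat.not_odd_iff_even.mp ho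
        have hor : Odd (x ∩ r.leaves).card := by
          rw [Nat.odd_iff]; rw [Nat.even_iff] at hel; rw [Nat.odd_iff] at hpar; omega
        obtain ⟨Wl, hWl, hWlu⟩ := ihlE (x ∩ l.leaves) Finset.inter_subset_right hel
        obtain ⟨Pr, hPr, hPru⟩ := ihrO (x ∩ r.leaves) Finset.inter_subset_right hor
        have hW : GoodO (node l r) x (Pr.1, Wl ∪ Pr.2) := by
          rw [hxu]
          exact GoodO.combineEvenR hd Finset.inter_subset_right Finset.inter_subset_right
            hWl hPr
        refine ⟨(Pr.1, Wl ∪ Pr.2), hW, ?_⟩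
        rintro ⟨ℓ, M⟩ ⟨hℓx, hGM, hspine⟩
        simp only at hℓx hGM hspine
        have hroot : node l r ∈ spineP (node l r) ℓ := root_mem_spineP (hx hℓx)
        have hnc : ∀ p ∈ M, p ⊆ l.leaves ∨ p ⊆ r.leaves := by
          intro p hp
          by_contra hcp
          push_neg at hcp
          obtain ⟨a, b, haL, hbR, rfl⟩ := crossing_struct (hGM.1 p hp)
            ((hGM.2.1 p hp).trans ((Finset.erase_subset _ _).trans hx')) hcp.1 hcp.2
          exact Finset.disjoint_left.mp (hspine _ hp) (root_mem_pathSet_cross hd haL hbR) hroot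
        obtain ⟨hGl, hGr, hMeq⟩ := hGM.split hd hnc
        rw [erase_inter] at hGl hGr
        have hℓR : ℓ ∈ r.leaves := by
          rcases Finset.mem_union.mp (hx' hℓx) with h | h
          · exfalso
            have hnr : ℓ ∉ x ∩ r.leaves :=
              fun hh => Finset.disjoint_left.mp hd h (Finset.mem_inter.mp hh).2
            rw [Finset.erase_eq_of_notMem hnr] at hGr
            exact (Nat.not_odd_iff_even.mpr hGr.even_card) hor
          · exact h
        have hℓnl : ℓ ∉ x ∩ l.leaves :=
          fun hh => Finset.disjoint_left.mp hd (Finset.mem_inter.mp hh).2 hℓR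
        rw [Finset.erase_eq_of_notMem hℓnl] at hGl
        have hspl : spineP (node l r) ℓ = insert (node l r) (spineP r ℓ) :=
          spineP_node_right hd hℓR
        have hOr : GoodO r (x ∩ r.leaves) (ℓ, M.filter (fun p => ¬ p ⊆ l.leaves)) := by
          refine ⟨Finset.mem_inter.mpr ⟨hℓx, hℓR⟩, hGr, ?_⟩
          intro p hp
          simp only [Finset.mem_filter] at hp
          have hpr : p ⊆ r.leaves := by
            rcases hnc p hp.1 with h | h
            · exact absurd h hp.2
            · exact h
          have := hspine p hp.1
          rw [hspl, ← pathSet_node_right hd (hGM.nonempty_of_mem hp.1) hpr] at *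
          exact this.mono_right (Finset.subset_insert _ _)
        have hr2 := hPru _ hOr
        have hl2 := hWlu _ hGl
        rw [← hr2]
        show (ℓ, M) = (ℓ, Wl ∪ M.filter (fun p => ¬ p ⊆ l.leaves))
        rw [Prod.mk.injEq]
        exact ⟨rfl, by (conv_lhs => rw [hMeq]); rw [hl2]⟩

end PhyloTree
/-- For any even-size set `x` of leaves of a rooted binary phylogenetic tree `T`,
there is a unique perfect matching of `x` such that the paths in `T` between
paired leaves are pairwise vertex-disjoint. -/
theorem existsUnique_disjoint_path_matching
    (n : ℕ) (t : PhyloTree) (ht : PhyloTree.IsPhylo n t)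
    (x : Finset ℕ) (hx : x ⊆ Finset.range n) (hcard : Even x.card) :
    ∃! M : Finset (Finset ℕ),
      (∀ p ∈ M, p.card = 2) ∧
      (∀ p ∈ M, p ⊆ x) ∧
      (∀ ℓ ∈ x, ∃! p, p ∈ M ∧ ℓ ∈ p) ∧
      (∀ p ∈ M, ∀ q ∈ M, p ≠ q → Disjoint (t.pathSet p) (t.pathSet q)) := by
  have h1 : t.leaves = Finset.range n := by
    rw [PhyloTree.leaves_eq_toFinset, ht.2]
  obtain ⟨M, hM, hu⟩ := (PhyloTree.existsUnique_good t ht.1).1 x (by rw [h1]; exact hx) hcard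
  exact ⟨M, ⟨hM.1, hM.2.1, hM.2.2.1, hM.2.2.2⟩,
    fun y hy => hu y ⟨hy.1, hy.2.1, hy.2.2.1, hy.2.2.2⟩⟩
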